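/- Roots of the first bicharacteristic speed (Lemma B.2): define d₁(θ) = u − c·G_c(θ). If |u| < c·√(g¹¹), then d₁ has exactly two zeros in [0, 2π), one lying in the open interval (0, π) and one in (π, 2π); if |u| ≥ c·√(g¹¹), then d₁ has at most one zero in [0, 2π). -/
import Mathlib

open Real Matrix

noncomputable def swK (g11 g12 g22 θ : ℝ) : ℝ :=
  Real.sqrt (g11 * Real.cos θ ^ 2 + 2 * g12 * Real.sin θ * Real.cos θ + g22 * Real.sin θ ^ 2)

noncomputable def swC (g h : ℝ) : ℝ := Real.sqrt (g * h)

noncomputable def swGc (g11 g12 g22 θ : ℝ) : ℝ :=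
  (g11 * Real.cos θ + g12 * Real.sin θ) / swK g11 g12 g22 θ

noncomputable def swGs (g11 g12 g22 θ : ℝ) : ℝ :=
  (g12 * Real.cos θ + g22 * Real.sin θ) / swK g11 g12 g22 θ

lemma swQ_pos (g11 g12 g22 : ℝ) (h11 : 0 < g11) (hdet : 0 < g11 * g22 - g12 ^ 2) (θ : ℝ) :
    0 < g11 * Real.cos θ ^ 2 + 2 * g12 * Real.sin θ * Real.cos θ + g22 * Real.sin θ ^ 2 := by
  rcases eq_or_ne (Real.sin θ) 0 with hs | hs
  · have hc := Real.sin_sq_add_cos_sq θ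
    rw [hs] at hc ⊢
    nlinarith [hc]
  · nlinarith [sq_nonneg (g11 * Real.cos θ + g12 * Real.sin θ),
      mul_pos hdet (by positivity : (0:ℝ) < Real.sin θ ^ 2)]

lemma swK_pos (g11 g12 g22 : ℝ) (h11 : 0 < g11) (hdet : 0 < g11 * g22 - g12 ^ 2) (θ : ℝ) :
    0 < swK g11 g12 g22 θ :=
  Real.sqrt_pos.2 (swQ_pos g11 g12 g22 h11 hdet θ)

lemma swK_sq (g11 g12 g22 : ℝ) (h11 : 0 < g11) (hdet : 0 < g11 * g22 - g12 ^ 2) (θ : ℝ) :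
    swK g11 g12 g22 θ ^ 2
      = g11 * Real.cos θ ^ 2 + 2 * g12 * Real.sin θ * Real.cos θ + g22 * Real.sin θ ^ 2 :=
  Real.sq_sqrt (swQ_pos g11 g12 g22 h11 hdet θ).le

/-- Pure algebra: two "zeros" give `A * s' = A' * s`. -/
lemma key_alg (g11 D c u A A' s s' K K' : ℝ) (hD : 0 < D) (hc : 0 < c)
    (hKpos : 0 < K) (hK'pos : 0 < K')
    (e1 : g11 * K ^ 2 = A ^ 2 + D * s ^ 2)
    (e1' : g11 * K' ^ 2 = A' ^ 2 + D * s' ^ 2)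
    (hss : 0 < s * s')
    (h1 : c * A = u * K) (h2 : c * A' = u * K') :
    A * s' = A' * s := by
  have hAK : A * K' = A' * K := by
    apply mul_left_cancel₀ hc.ne'
    calc c * (A * K') = (c * A) * K' := by ring
    _ = (u * K) * K' := by rw [h1]
    _ = (u * K') * K := by ring
    _ = (c * A') * K := by rw [h2]
    _ = c * (A' * K) := by ring
  have h4 : A ^ 2 * K' ^ 2 = A' ^ 2 * K ^ 2 := by
    linear_combination (A * K' + A' * K) * hAK
  have h5 : A ^ 2 * s' ^ 2 = A' ^ 2 * s ^ 2 := by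
    have key : D * (A ^ 2 * s' ^ 2) = D * (A' ^ 2 * s ^ 2) := by
      linear_combination g11 * h4 - A ^ 2 * e1' + A' ^ 2 * e1
    exact mul_left_cancel₀ hD.ne' key
  have hAA : 0 ≤ A * A' := by
    have h6 : A * A' * K' = A' ^ 2 * K := by linear_combination A' * hAK
    nlinarith [mul_nonneg (sq_nonneg A') hKpos.le]
  have hfac : (A * s' - A' * s) * (A * s' + A' * s) = 0 := by linear_combination h5
  rcases mul_eq_zero.1 hfac with h | h
  · linarith
  · have hA2 : A ^ 2 * (s * s') = -(A * A') * s ^ 2 := by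
      linear_combination (A * s) * h
    have hA0 : A ^ 2 ≤ 0 := by nlinarith [mul_nonneg hAA (sq_nonneg s)]
    have hAz : A = 0 := by nlinarith [sq_nonneg A]
    rw [hAz, zero_mul] at h ⊢
    linarith

lemma sin_sub_eq_zero_of_zeros (g11 g12 g22 c u : ℝ) (h11 : 0 < g11)
    (hdet : 0 < g11 * g22 - g12 ^ 2) (hc : 0 < c) {θ θ' : ℝ}
    (hss : 0 < Real.sin θ * Real.sin θ')
    (h1 : c * (g11 * Real.cos θ + g12 * Real.sin θ) = u * swK g11 g12 g22 θ)
    (h2 : c * (g11 * Real.cos θ' + g12 * Real.sin θ') = u * swK g11 g12 g22 θ') :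
    Real.sin (θ' - θ) = 0 := by
  have hfin := key_alg g11 (g11 * g22 - g12 ^ 2) c u
      (g11 * Real.cos θ + g12 * Real.sin θ) (g11 * Real.cos θ' + g12 * Real.sin θ')
      (Real.sin θ) (Real.sin θ') (swK g11 g12 g22 θ) (swK g11 g12 g22 θ')
      hdet hc (swK_pos g11 g12 g22 h11 hdet θ) (swK_pos g11 g12 g22 h11 hdet θ')
      (by rw [swK_sq g11 g12 g22 h11 hdet θ]; ring)
      (by rw [swK_sq g11 g12 g22 h11 hdet θ']; ring)
      hss h1 h2
  have hg : g11 * (Real.sin θ' * Real.cos θ - Real.cos θ' * Real.sin θ) = 0 := by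
    linear_combination hfin
  rw [Real.sin_sub]
  rcases mul_eq_zero.1 hg with h | h
  · exact absurd h h11.ne'
  · exact h

set_option maxHeartbeats 1000000 in
/-- Roots of the first bicharacteristic speed (Lemma B.2). -/
theorem roots_first_bicharacteristic_speed
    (g h u v g11 g12 g22 : ℝ) (hg : 0 < g) (hh : 0 < h)
    (h11 : 0 < g11) (hdet : 0 < g11 * g22 - g12 ^ 2) :
    let c := swC g h
    let d1 : ℝ → ℝ := fun θ => u - c * swGc g11 g12 g22 θ
    (|u| < c * Real.sqrt g11 →
      ∃ θ1 ∈ Set.Ioo (0 : ℝ) π, ∃ θ2 ∈ Set.Ioo π (2 * π),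
        d1 θ1 = 0 ∧ d1 θ2 = 0 ∧
        ∀ θ ∈ Set.Ico (0 : ℝ) (2 * π), d1 θ = 0 → θ = θ1 ∨ θ = θ2) ∧
    (c * Real.sqrt g11 ≤ |u| →
      {θ ∈ Set.Ico (0 : ℝ) (2 * π) | d1 θ = 0}.Subsingleton) := by
  intro c d1
  have hc : 0 < c := Real.sqrt_pos.2 (mul_pos hg hh)
  have hKpos := swK_pos g11 g12 g22 h11 hdet
  have hsg : 0 < Real.sqrt g11 := Real.sqrt_pos.2 h11
  have hg11sq : Real.sqrt g11 * Real.sqrt g11 = g11 := Real.mul_self_sqrt h11.le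
  have hK0 : swK g11 g12 g22 0 = Real.sqrt g11 := by simp [swK]
  have hKpi : swK g11 g12 g22 π = Real.sqrt g11 := by simp [swK]
  have hK2pi : swK g11 g12 g22 (2 * π) = Real.sqrt g11 := by
    simp [swK, Real.cos_two_pi, Real.sin_two_pi]
  have hzero : ∀ θ, d1 θ = 0 ↔
      c * (g11 * Real.cos θ + g12 * Real.sin θ) = u * swK g11 g12 g22 θ := by
    intro θ
    show u - c * swGc g11 g12 g22 θ = 0 ↔ _
    rw [swGc, sub_eq_zero, ← mul_div_assoc, eq_div_iff (hKpos θ).ne']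
    constructor <;> intro hx <;> linarith
  have hpi := Real.pi_pos
  constructor
  · intro hlt
    have hu1 : u < c * Real.sqrt g11 := (abs_lt.1 hlt).2
    have hu2 : -(c * Real.sqrt g11) < u := (abs_lt.1 hlt).1
    set F : ℝ → ℝ := fun θ =>
      c * (g11 * Real.cos θ + g12 * Real.sin θ) - u * swK g11 g12 g22 θ with hF
    have hFcont : Continuous F := by
      apply Continuous.sub
      · fun_prop
      · apply Continuous.mul continuous_const
        unfold swK
        fun_prop
    have hF0 : 0 < F 0 := by
      simp only [hF, Real.cos_zero, Real.sin_zero, hK0]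
      nlinarith
    have hFpi : F π < 0 := by
      simp only [hF, Real.cos_pi, Real.sin_pi, hKpi]
      nlinarith
    have hF2pi : 0 < F (2 * π) := by
      simp only [hF, Real.cos_two_pi, Real.sin_two_pi, hK2pi]
      nlinarith
    have hd1 : ∀ θ, d1 θ = 0 ↔ F θ = 0 := by
      intro θ
      rw [hzero θ]
      simp only [hF]
      rw [sub_eq_zero]
    obtain ⟨θ1, hθ1mem, hθ1⟩ : ∃ x ∈ Set.Ioo (0:ℝ) π, F x = 0 := by
      have := intermediate_value_Ioo' (le_of_lt hpi) hFcont.continuousOn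
        (show (0:ℝ) ∈ Set.Ioo (F π) (F 0) from ⟨hFpi, hF0⟩)
      obtain ⟨x, hx, hx0⟩ := this
      exact ⟨x, hx, hx0⟩
    obtain ⟨θ2, hθ2mem, hθ2⟩ : ∃ x ∈ Set.Ioo π (2*π), F x = 0 := by
      have := intermediate_value_Ioo (by linarith : π ≤ 2*π) hFcont.continuousOn
        (show (0:ℝ) ∈ Set.Ioo (F π) (F (2*π)) from ⟨hFpi, hF2pi⟩)
      obtain ⟨x, hx, hx0⟩ := this
      exact ⟨x, hx, hx0⟩
    have hs1 : 0 < Real.sin θ1 := Real.sin_pos_of_pos_of_lt_pi hθ1mem.1 hθ1mem.2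
    have hs2 : Real.sin θ2 < 0 := by
      have haux : Real.sin (θ2 - π) = -Real.sin θ2 := by
        rw [Real.sin_sub]; simp
      have : 0 < Real.sin (θ2 - π) :=
        Real.sin_pos_of_pos_of_lt_pi (by linarith [hθ2mem.1]) (by linarith [hθ2mem.2])
      linarith [haux ▸ this]
    refine ⟨θ1, hθ1mem, θ2, hθ2mem, (hd1 θ1).2 hθ1, (hd1 θ2).2 hθ2, ?_⟩
    intro θ hθ hθ0
    have hFθ := (hzero θ).1 hθ0
    have hne0 : θ ≠ 0 := by
      rintro rfl
      have := (hd1 0).1 hθ0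
      linarith
    have hnepi : θ ≠ π := by
      rintro rfl
      have := (hd1 π).1 hθ0
      linarith
    rcases lt_trichotomy θ π with hlt' | heq | hgt'
    · left
      have hθpos : 0 < θ := lt_of_le_of_ne hθ.1 (Ne.symm hne0)
      have hsθ : 0 < Real.sin θ := Real.sin_pos_of_pos_of_lt_pi hθpos hlt'
      have hz := sin_sub_eq_zero_of_zeros g11 g12 g22 c u h11 hdet hc
        (mul_pos hsθ hs1) hFθ ((hzero θ1).1 ((hd1 θ1).2 hθ1))
      have hb1 : -π < θ1 - θ := by linarith [hθ1mem.1]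
      have hb2 : θ1 - θ < π := by linarith [hθ1mem.2]
      have := (Real.sin_eq_zero_iff_of_lt_of_lt hb1 hb2).1 hz
      linarith
    · exact absurd heq hnepi
    · right
      have hsθ : Real.sin θ < 0 := by
        have haux : Real.sin (θ - π) = -Real.sin θ := by
          rw [Real.sin_sub]; simp
        have : 0 < Real.sin (θ - π) :=
          Real.sin_pos_of_pos_of_lt_pi (by linarith) (by linarith [hθ.2])
        linarith [haux ▸ this]
      have hz := sin_sub_eq_zero_of_zeros g11 g12 g22 c u h11 hdet hc
        (mul_pos_of_neg_of_neg hsθ hs2) hFθ ((hzero θ2).1 ((hd1 θ2).2 hθ2))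
      have hb1 : -π < θ2 - θ := by linarith [hθ2mem.1, hθ.2]
      have hb2 : θ2 - θ < π := by linarith [hθ2mem.2]
      have := (Real.sin_eq_zero_iff_of_lt_of_lt hb1 hb2).1 hz
      linarith
  · intro hge
    have husq : g11 * c ^ 2 ≤ u ^ 2 := by
      nlinarith [sq_abs u, abs_nonneg u, mul_nonneg hc.le hsg.le]
    have hupos : (0:ℝ) < u ^ 2 := lt_of_lt_of_le (by positivity) husq
    have key : ∀ θ ∈ Set.Ico (0:ℝ) (2*π), d1 θ = 0 →
        (θ = 0 ∧ u * Real.sqrt g11 = c * g11) ∨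
        (θ = π ∧ u * Real.sqrt g11 = -(c * g11)) := by
      intro θ hθ h0
      have hFθ := (hzero θ).1 h0
      have hsq : c ^ 2 * (g11 * Real.cos θ + g12 * Real.sin θ) ^ 2
          = u ^ 2 * swK g11 g12 g22 θ ^ 2 := by
        linear_combination (c * (g11 * Real.cos θ + g12 * Real.sin θ)
          + u * swK g11 g12 g22 θ) * hFθ
      have e1 : g11 * swK g11 g12 g22 θ ^ 2
          = (g11 * Real.cos θ + g12 * Real.sin θ) ^ 2
            + (g11 * g22 - g12 ^ 2) * Real.sin θ ^ 2 := by
        rw [swK_sq g11 g12 g22 h11 hdet θ]; ring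
      have hkey : u ^ 2 * ((g11 * g22 - g12 ^ 2) * Real.sin θ ^ 2)
          = (g11 * c ^ 2 - u ^ 2) * (g11 * Real.cos θ + g12 * Real.sin θ) ^ 2 := by
        linear_combination (-g11) * hsq - u ^ 2 * e1
      have hsle : Real.sin θ ^ 2 ≤ 0 := by
        nlinarith [mul_nonneg (sub_nonneg.2 husq) (sq_nonneg (g11 * Real.cos θ + g12 * Real.sin θ)),
          mul_pos hupos hdet, sq_nonneg (Real.sin θ)]
      have hs0 : Real.sin θ = 0 := by
        have h2 : Real.sin θ ^ 2 = 0 := le_antisymm hsle (sq_nonneg _)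
        exact (pow_eq_zero_iff two_ne_zero).1 h2
      rcases Real.sin_eq_zero_iff.1 hs0 with ⟨n, hn⟩
      have hn0 : 0 ≤ n := by
        by_contra hcon
        push_neg at hcon
        have hcn : (n : ℝ) < 0 := by exact_mod_cast hcon
        have hlt := mul_neg_of_neg_of_pos hcn hpi
        rw [hn] at hlt
        linarith [hθ.1]
      have hn2 : n < 2 := by
        by_contra hcon
        push_neg at hcon
        have hcn : (2 : ℝ) ≤ (n : ℝ) := by exact_mod_cast hcon
        have hle := mul_le_mul_of_nonneg_right hcn hpi.le
        rw [hn] at hle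
        linarith [hθ.2]
      interval_cases n
      · left
        have hθ0 : θ = 0 := by push_cast at hn; linarith
        rw [hθ0] at hFθ
        rw [Real.cos_zero, Real.sin_zero, hK0] at hFθ
        constructor
        · exact hθ0
        · linear_combination -hFθ
      · right
        have hθpi : θ = π := by push_cast at hn; linarith
        rw [hθpi] at hFθ
        rw [Real.cos_pi, Real.sin_pi, hKpi] at hFθ
        constructor
        · exact hθpi
        · linear_combination -hFθ
    intro θa ha θb hb
    obtain ⟨ha1, ha2⟩ := ha
    obtain ⟨hb1, hb2⟩ := hb
    rcases key θa ha1 ha2 with ⟨hae, heqa⟩ | ⟨hae, heqa⟩ <;>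
      rcases key θb hb1 hb2 with ⟨hbe, heqb⟩ | ⟨hbe, heqb⟩
    · rw [hae, hbe]
    · exfalso; nlinarith [mul_pos hc h11]
    · exfalso; nlinarith [mul_pos hc h11]
    · rw [hae, hbe]
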